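/- Let ζ₋, ζ₊, c_reg > 0, δ, λ ∈ (0,1) with δ(1-λ) < 1, and suppose J* : X → ℝ satisfies the Bellman equation J*(x) = ℓ(x) + δJ*(F(x)), with ℓ(x) ≥ ζ₋V(x) and J*(x) ≤ ((ζ₊ + c_reg)/(1 - δ(1-λ)))V(x) for all x in a forward invariant set Ω. Then J*(F(x)) ≤ q·J*(x) on Ω, where q = δ⁻¹(1 - (1 - δ(1-λ))ζ₋/(ζ₊ + c_reg)). -/

import Mathlib

theorem practical_value_decrease {X : Type*}
    (ζm ζp creg δ lam : ℝ) (hζm : 0 < ζm) (hζp : 0 < ζp) (hcreg : 0 < creg)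
    (hδ : δ ∈ Set.Ioo (0 : ℝ) 1) (hlam : lam ∈ Set.Ioo (0 : ℝ) 1)
    (V : X → ℝ) (hV : ∀ x, 0 ≤ V x)
    (J : X → ℝ) (ℓ : X → ℝ) (F : X → X) (Ω : Set X)
    (hinv : ∀ x ∈ Ω, F x ∈ Ω)
    (hBellman : ∀ x ∈ Ω, J x = ℓ x + δ * J (F x))
    (hstage : ∀ x ∈ Ω, ζm * V x ≤ ℓ x)
    (hub : ∀ x ∈ Ω, J x ≤ ((ζp + creg) / (1 - δ * (1 - lam))) * V x) :
    ∀ x ∈ Ω, J (F x) ≤ δ⁻¹ * (1 - (1 - δ * (1 - lam)) * ζm / (ζp + creg)) * J x := by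
  intro x hx
  obtain ⟨hδ0, hδ1⟩ := hδ
  obtain ⟨hl0, hl1⟩ := hlam
  have hden : 0 < 1 - δ * (1 - lam) := by nlinarith
  have hpc : 0 < ζp + creg := by linarith
  have hB := hBellman x hx
  have hs := hstage x hx
  have hu := hub x hx
  have hVJ : (1 - δ * (1 - lam)) / (ζp + creg) * J x ≤ V x := by
    rw [div_mul_eq_mul_div, div_le_iff₀ hpc]
    calc (1 - δ * (1 - lam)) * J x
        ≤ (1 - δ * (1 - lam)) * ((ζp + creg) / (1 - δ * (1 - lam)) * V x) := by
          exact mul_le_mul_of_nonneg_left hu hden.le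
      _ = V x * (ζp + creg) := by field_simp
  have hlJ : (1 - δ * (1 - lam)) * ζm / (ζp + creg) * J x ≤ ℓ x := by
    calc (1 - δ * (1 - lam)) * ζm / (ζp + creg) * J x
        = ζm * ((1 - δ * (1 - lam)) / (ζp + creg) * J x) := by ring
      _ ≤ ζm * V x := mul_le_mul_of_nonneg_left hVJ hζm.le
      _ ≤ ℓ x := hs
  rw [inv_mul_eq_div, div_mul_eq_mul_div, le_div_iff₀ hδ0]
  nlinarith [hlJ, hB]
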